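/- Let $T$ be a rooted tree in which every non-root vertex has at least two children, equipped with the visual metric $\bar\rho(x,y)=2^{-|x\wedge y|}$ on its boundary $\partial T$. If $(\partial T,\bar\rho)$ is Ahlfors $Q$-regular, then there exists $N$ such that every vertex of $T$ has at most $N$ children. -/

import Mathlib

open MeasureTheory Metric Set ENNReal NNReal

/-- Hausdorff measure of dimension `Q` computed from an explicit metric structure. -/
noncomputable def hMeas {Z : Type*} (m : MetricSpace Z) (Q : ℝ) (s : Set Z) : ℝ≥0∞ :=
  letI := m
  letI : MeasurableSpace Z := borel Z
  letI : BorelSpace Z := ⟨rfl⟩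
  μH[Q] s

/-- `(Z, m)` is an Ahlfors `Q`-regular metric space. -/
def IsAhlfors {Z : Type*} (m : MetricSpace Z) (Q : ℝ) : Prop :=
  letI := m
  ∃ c C : ℝ, 0 < c ∧ c < C ∧ ∀ z : Z, ∀ r : ℝ, 0 < r → r ≤ diam (univ : Set Z) →
    ENNReal.ofReal (c * r ^ Q) ≤ hMeas m Q (ball z r) ∧
      hMeas m Q (ball z r) ≤ ENNReal.ofReal (C * r ^ Q)

/-- Metric structure induced on a subset. -/
noncomputable def subMetric {Z : Type*} (m : MetricSpace Z) (Y : Set Z) : MetricSpace Y :=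
  letI := m; inferInstance

/-- A rooted tree encoded as a prefix-closed, locally finite set of finite sequences,
with no leaves. -/
def IsTreeSet (V : Set (List ℕ)) : Prop :=
  [] ∈ V ∧ (∀ l x, l ++ [x] ∈ V → l ∈ V) ∧
    ∀ l ∈ V, {x : ℕ | l ++ [x] ∈ V}.Finite ∧ {x : ℕ | l ++ [x] ∈ V}.Nonempty

/-- The children of a vertex. -/
def children (V : Set (List ℕ)) (l : List ℕ) : Set ℕ := {x : ℕ | l ++ [x] ∈ V}

/-- Every non-root vertex has at least two children. -/
def AtLeastTwo (V : Set (List ℕ)) : Prop :=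
  ∀ l ∈ V, l ≠ [] → 2 ≤ (children V l).ncard

/-- The boundary of the tree: infinite rays from the root. -/
def tB (V : Set (List ℕ)) : Set (ℕ → ℕ) :=
  {ξ | ∀ n : ℕ, (List.ofFn fun i : Fin n => ξ i) ∈ V}

/-- The visual metric `2 ^ (-|ξ ∧ η|)` on sequences. -/
noncomputable def visualMetric : MetricSpace (ℕ → ℕ) := PiNat.metricSpaceNatNat

/-- The boundary of a tree as a metric space, with the visual metric. -/
noncomputable def bMetric (V : Set (List ℕ)) : MetricSpace (tB V) :=
  subMetric visualMetric (tB V)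

/-- The finite prefix of length `n` of a ray. -/
def rayPrefix (ξ : ℕ → ℕ) (n : ℕ) : List ℕ := List.ofFn fun i : Fin n => ξ i

/-- `∂T(l)`: the rays through the vertex `l`. -/
def tBx (V : Set (List ℕ)) (l : List ℕ) : Set (tB V) :=
  {ξ : tB V | rayPrefix ξ.1 l.length = l}

/-- `S_k(l)`: the descendants of `l` at distance `k`. -/
def Sk (V : Set (List ℕ)) (l : List ℕ) (k : ℕ) : Set (List ℕ) :=
  {m : List ℕ | m ∈ V ∧ l <+: m ∧ m.length = l.length + k}

/-- A stopping set below the vertex `l`: a set of descendants of `l` whose subtree boundaries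
partition `∂T(l)`. -/
def IsStop (V : Set (List ℕ)) (l : List ℕ) (S : Set (List ℕ)) : Prop :=
  (∀ y ∈ S, y ∈ V ∧ l <+: y) ∧
    (S.Pairwise fun y z => tBx V y ∩ tBx V z = ∅) ∧
    (⋃ y ∈ S, tBx V y) = tBx V l

lemma prefix_mem {V : Set (List ℕ)} (hV : IsTreeSet V) :
    ∀ l ∈ V, ∀ p, p <+: l → p ∈ V := by
  intro l
  induction l using List.reverseRecOn with
  | nil => intro _ p hp; simpa [List.prefix_nil.1 hp] using hV.1
  | append_singleton m x ih =>
    intro hm p hp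
    rcases List.prefix_concat_iff.1 hp with h | h
    · exact h ▸ hm
    · exact ih (hV.2.1 m x hm) p h

open Classical in

noncomputable def pick (V : Set (List ℕ)) (m : List ℕ) : ℕ :=
  if h : (children V m).Nonempty then h.choose else 0

lemma pick_mem {V : Set (List ℕ)} (hV : IsTreeSet V) {m : List ℕ} (hm : m ∈ V) :
    m ++ [pick V m] ∈ V := by
  have h : (children V m).Nonempty := (hV.2.2 m hm).2
  rw [pick, dif_pos h]; exact h.choose_spec

noncomputable def extSeq (V : Set (List ℕ)) (l : List ℕ) : ℕ → List ℕ
  | 0 => l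
  | k + 1 => extSeq V l k ++ [pick V (extSeq V l k)]

lemma extSeq_mem {V : Set (List ℕ)} (hV : IsTreeSet V) {l : List ℕ} (hl : l ∈ V) (k : ℕ) :
    extSeq V l k ∈ V := by
  induction k with
  | zero => exact hl
  | succ k ih => exact pick_mem hV ih

lemma extSeq_length (V : Set (List ℕ)) (l : List ℕ) (k : ℕ) :
    (extSeq V l k).length = l.length + k := by
  induction k with
  | zero => rfl
  | succ k ih => simp [extSeq, ih]; omega

lemma extSeq_prefix (V : Set (List ℕ)) (l : List ℕ) {k k' : ℕ} (h : k ≤ k') :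
    extSeq V l k <+: extSeq V l k' := by
  induction k' with
  | zero => simpa [Nat.le_zero.1 h]
  | succ k' ih =>
    rcases Nat.lt_or_ge k (k'+1) with h' | h'
    · exact (ih (by omega)).trans (by simp [extSeq])
    · have : k = k' + 1 := by omega
      simp [this]

noncomputable def rayOf (V : Set (List ℕ)) (l : List ℕ) : ℕ → ℕ :=
  fun i => (extSeq V l (i + 1)).getD i 0

lemma rayPrefix_rayOf (V : Set (List ℕ)) (l : List ℕ) (n : ℕ) :
    rayPrefix (rayOf V l) n = (extSeq V l n).take n := by
  have hlen : ∀ k, n ≤ (extSeq V l k).length ∨ True := fun _ => Or.inr trivial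
  apply List.ext_getElem
  · simp [rayPrefix, extSeq_length]
  · intro i h1 h2
    simp only [rayPrefix, List.getElem_ofFn, List.getElem_take]
    have hi : i < n := by simpa [rayPrefix] using h1
    have hlen1 : i < (extSeq V l (i+1)).length := by rw [extSeq_length]; omega
    have hpre : extSeq V l (i+1) <+: extSeq V l n := extSeq_prefix V l (by omega)
    have := hpre.getElem hlen1
    simp [rayOf, List.getD_eq_getElem _ _ hlen1, List.getElem?_eq_getElem hlen1, this]

lemma rayOf_mem_tB {V : Set (List ℕ)} (hV : IsTreeSet V) {l : List ℕ} (hl : l ∈ V) :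
    rayOf V l ∈ tB V := by
  intro n
  have : rayPrefix (rayOf V l) n ∈ V := by
    rw [rayPrefix_rayOf]
    exact prefix_mem hV _ (extSeq_mem hV hl n) _ (List.take_prefix _ _)
  simpa [rayPrefix] using this

lemma rayPrefix_rayOf_self {V : Set (List ℕ)} (l : List ℕ) :
    rayPrefix (rayOf V l) l.length = l := by
  rw [rayPrefix_rayOf]
  have h : l <+: extSeq V l l.length := extSeq_prefix V l (Nat.zero_le _)
  exact (List.prefix_iff_eq_take.1 h).symm

lemma rayPrefix_succ (ξ : ℕ → ℕ) (n : ℕ) :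
    rayPrefix ξ (n + 1) = rayPrefix ξ n ++ [ξ n] := by
  rw [rayPrefix, List.ofFn_succ', List.concat_eq_append]
  rfl

lemma rayPrefix_eq_iff (ξ η : ℕ → ℕ) (n : ℕ) :
    rayPrefix ξ n = rayPrefix η n ↔ ∀ i < n, ξ i = η i := by
  constructor
  · intro h i hi
    have := congrArg (fun l => l.getD i 0) h
    simpa [rayPrefix, List.getD_eq_getElem, hi] using this
  · intro h
    rw [rayPrefix, rayPrefix, List.ofFn_inj]
    exact funext fun i => h i i.2

lemma bdist_eq (V : Set (List ℕ)) (ξ η : tB V) :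
    @dist _ (bMetric V).toDist ξ η = @dist _ PiNat.dist ξ.1 η.1 := rfl

-- core ball identity: for m of length n+1 and a ray ξm through m,
-- ball ξm (1/2)^n = tBx V m

lemma ball_eq_tBx (V : Set (List ℕ)) {m : List ℕ} {n : ℕ} (hm : m.length = n + 1)
    (ξm : tB V) (hξ : rayPrefix ξm.1 (n + 1) = m) :
    @Metric.ball _ (bMetric V).toPseudoMetricSpace ξm ((1/2 : ℝ) ^ n) = tBx V m := by
  ext η
  simp only [Metric.mem_ball, tBx, Set.mem_setOf_eq, bdist_eq, hm]
  constructor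
  · intro h
    rw [← hξ, rayPrefix_eq_iff]
    intro i hi
    exact PiNat.apply_eq_of_dist_lt h (by omega)
  · intro h
    have hcyl : η.1 ∈ PiNat.cylinder ξm.1 (n + 1) := by
      intro i hi
      exact (rayPrefix_eq_iff η.1 ξm.1 (n+1)).1 (h.trans hξ.symm) i hi
    have := PiNat.mem_cylinder_iff_dist_le.1 hcyl
    calc @dist _ PiNat.dist η.1 ξm.1 ≤ (1/2 : ℝ) ^ (n+1) := this
      _ < (1/2 : ℝ) ^ n := by
        apply pow_lt_pow_right_of_lt_one₀ <;> norm_num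

lemma tBx_disjoint (V : Set (List ℕ)) {m m' : List ℕ} (hlen : m.length = m'.length)
    (hne : m ≠ m') : tBx V m ∩ tBx V m' = ∅ := by
  ext η
  simp only [Set.mem_inter_iff, tBx, Set.mem_setOf_eq, Set.mem_empty_iff_false, iff_false]
  rintro ⟨h1, h2⟩
  rw [hlen] at h1
  exact hne (h1.symm.trans h2)

lemma tBx_child_subset (V : Set (List ℕ)) (l : List ℕ) (x : ℕ) :
    tBx V (l ++ [x]) ⊆ tBx V l := by
  intro η h
  simp only [tBx, Set.mem_setOf_eq] at h ⊢
  have hlen : (l ++ [x]).length = l.length + 1 := by simp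
  rw [hlen, rayPrefix_succ] at h
  have := congrArg (fun t => t.take l.length) h
  simpa [rayPrefix] using this

lemma tBx_subset_ball (V : Set (List ℕ)) {l : List ℕ} {n : ℕ} (hn : l.length = n + 1)
    (ξl : tB V) (hξ : ξl ∈ tBx V l) :
    tBx V l ⊆ @Metric.ball _ (bMetric V).toPseudoMetricSpace ξl ((1/2 : ℝ) ^ n) := by
  intro η h
  simp only [tBx, Set.mem_setOf_eq, hn] at h hξ
  have hcyl : η.1 ∈ PiNat.cylinder ξl.1 (n + 1) := by
    intro i hi
    exact (rayPrefix_eq_iff η.1 ξl.1 (n+1)).1 (h.trans hξ.symm) i hi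
  have := PiNat.mem_cylinder_iff_dist_le.1 hcyl
  simp only [Metric.mem_ball, bdist_eq]
  calc @dist _ PiNat.dist η.1 ξl.1 ≤ (1/2 : ℝ) ^ (n+1) := this
    _ < (1/2 : ℝ) ^ n := by apply pow_lt_pow_right_of_lt_one₀ <;> norm_num

lemma rayPrefix_apply (ξ : ℕ → ℕ) (n i : ℕ) (hi : i < n) :
    (rayPrefix ξ n).getD i 0 = ξ i := by
  have : i < (rayPrefix ξ n).length := by simpa [rayPrefix]
  rw [List.getD_eq_getElem _ _ this]
  simp [rayPrefix]

lemma pinat_dist_le_one (x y : ℕ → ℕ) : @dist _ PiNat.dist x y ≤ 1 := by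
  rcases eq_or_ne x y with h | h
  · rw [h, PiNat.dist_self]; norm_num
  · rw [PiNat.dist_eq_of_ne h]
    exact pow_le_one₀ (by norm_num) (by norm_num)

lemma bounded_univ (V : Set (List ℕ)) :
    @Bornology.IsBounded _ (bMetric V).toPseudoMetricSpace.toBornology (Set.univ : Set (tB V)) := by
  letI := bMetric V
  rw [Metric.isBounded_iff]
  exact ⟨1, fun ξ _ η _ => by rw [bdist_eq]; exact pinat_dist_le_one _ _⟩

lemma half_le_diam {V : Set (List ℕ)} (hV : IsTreeSet V) (h2 : AtLeastTwo V) :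
    (1/2 : ℝ) ≤ @Metric.diam _ (bMetric V).toPseudoMetricSpace (Set.univ : Set (tB V)) := by
  letI := bMetric V
  obtain ⟨a, ha⟩ := (hV.2.2 [] hV.1).2
  have haV : [a] ∈ V := by simpa using ha
  have h2a := h2 [a] haV (by simp)
  have hfin : (children V [a]).Finite := (hV.2.2 [a] haV).1
  obtain ⟨b, hb, b', hb', hbb'⟩ := (Set.one_lt_ncard hfin).1 (by omega)
  have hab : [a, b] ∈ V := hb
  have hab' : [a, b'] ∈ V := hb'
  set ξ : tB V := ⟨rayOf V [a, b], rayOf_mem_tB hV hab⟩ with hξdef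
  set η : tB V := ⟨rayOf V [a, b'], rayOf_mem_tB hV hab'⟩ with hηdef
  have hξ1 : ξ.1 1 = b := by
    have h := rayPrefix_rayOf_self (V := V) [a, b]
    have := rayPrefix_apply (rayOf V [a, b]) 2 1 (by norm_num)
    rw [show ([a,b] : List ℕ).length = 2 from rfl] at h
    rw [h] at this
    simpa using this.symm
  have hη1 : η.1 1 = b' := by
    have h := rayPrefix_rayOf_self (V := V) [a, b']
    have := rayPrefix_apply (rayOf V [a, b']) 2 1 (by norm_num)
    rw [show ([a,b'] : List ℕ).length = 2 from rfl] at h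
    rw [h] at this
    simpa using this.symm
  have hd : (1/2 : ℝ) ≤ dist ξ η := by
    by_contra hlt
    push_neg at hlt
    have : ξ.1 1 = η.1 1 := by
      refine PiNat.apply_eq_of_dist_lt (n := 1) ?_ le_rfl
      rw [← bdist_eq]
      simpa using hlt
    exact hbb' (hξ1 ▸ hη1 ▸ this)
  exact hd.trans (Metric.dist_le_diam_of_mem (bounded_univ V) (Set.mem_univ _) (Set.mem_univ _))

/-- if the boundary of a rooted tree (each non-root vertex having at least two
children) is Ahlfors `Q`-regular, then the number of children of each vertex is uniformly
bounded. -/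
theorem stmt2 (V : Set (List ℕ)) (hV : IsTreeSet V) (h2 : AtLeastTwo V) (Q : ℝ)
    (hreg : IsAhlfors (bMetric V) Q) :
    ∃ N : ℕ, ∀ l ∈ V, (children V l).ncard ≤ N := by
  classical
  obtain ⟨c, C, hc, hcC, hAhl⟩ := hreg
  letI := bMetric V
  letI : MeasurableSpace (tB V) := borel _
  letI : @BorelSpace (tB V) (@UniformSpace.toTopologicalSpace _ (@PseudoEMetricSpace.toUniformSpace _ (@EMetricSpace.toPseudoEMetricSpace _ (@MetricSpace.toEMetricSpace _ ‹MetricSpace (tB V)›)))) _ := ⟨rfl⟩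
  have hμ : ∀ s : Set (tB V), hMeas (bMetric V) Q s = μH[Q] s := fun _ => rfl
  have hdiam := half_le_diam hV h2
  -- the finite set of small vertices
  set F : Finset (List ℕ) :=
    insert [] (((hV.2.2 [] hV.1).1.toFinset).image fun x => [x]) with hF
  set N₁ : ℕ := F.sup fun m => (children V m).ncard with hN₁
  set N₀ : ℕ := ⌈(C * (2:ℝ) ^ Q) / c⌉₊ with hN₀
  refine ⟨max N₀ N₁, fun l hl => ?_⟩
  match l with
  | [] =>
    refine le_trans ?_ (le_max_right _ _)
    exact Finset.le_sup (f := fun m => (children V m).ncard) (Finset.mem_insert_self _ _)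
  | [x] =>
    refine le_trans ?_ (le_max_right _ _)
    refine Finset.le_sup (f := fun m => (children V m).ncard) ?_
    refine Finset.mem_insert_of_mem (Finset.mem_image.2 ⟨x, ?_, rfl⟩)
    rw [Set.Finite.mem_toFinset]
    simpa using hl
  | (x₀ :: x₁ :: t) =>
    set l : List ℕ := x₀ :: x₁ :: t with hldef
    refine le_trans ?_ (le_max_left _ _)
    set n : ℕ := l.length with hn
    have hn2 : 2 ≤ n := by simp [hn, hldef]
    have hfin : (children V l).Finite := (hV.2.2 l hl).1
    set s : Finset ℕ := hfin.toFinset with hs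
    have hcard : (children V l).ncard = s.card := Set.ncard_eq_toFinset_card _ hfin
    rw [hcard]
    -- rays through children
    have hmemx : ∀ x ∈ s, l ++ [x] ∈ V := fun x hx => by
      rw [hs, Set.Finite.mem_toFinset] at hx; exact hx
    set B : ℕ → Set (tB V) := fun x => tBx V (l ++ [x]) with hB
    -- each B x is an open ball of radius (1/2)^n
    have hball : ∀ x ∈ s, ∃ z : tB V, Metric.ball z ((1/2 : ℝ) ^ n) = B x := by
      intro x hx
      refine ⟨⟨rayOf V (l ++ [x]), rayOf_mem_tB hV (hmemx x hx)⟩, ?_⟩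
      refine ball_eq_tBx V (by simp [hn]) _ ?_
      have := rayPrefix_rayOf_self (V := V) (l ++ [x])
      simpa using this
    -- lower bound for each B x
    have hrn : (0:ℝ) < (1/2 : ℝ) ^ n := by positivity
    have hrle : ((1/2 : ℝ)) ^ n ≤ Metric.diam (Set.univ : Set (tB V)) := by
      refine le_trans ?_ hdiam
      calc ((1/2:ℝ))^n ≤ (1/2:ℝ)^1 := by
            apply pow_le_pow_of_le_one (by norm_num) (by norm_num) (by omega)
        _ = 1/2 := pow_one _
    have hlow : ∀ x ∈ s, ENNReal.ofReal (c * ((1/2:ℝ)^n) ^ Q) ≤ μH[Q] (B x) := by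
      intro x hx
      obtain ⟨z, hz⟩ := hball x hx
      have := (hAhl z ((1/2:ℝ)^n) hrn hrle).1
      rw [hμ, hz] at this
      exact this
    -- measurability and disjointness
    have hmeas : ∀ x ∈ s, MeasurableSet (B x) := by
      intro x hx
      obtain ⟨z, hz⟩ := hball x hx
      rw [← hz]
      exact Metric.isOpen_ball.measurableSet
    have hdisj : (s : Set ℕ).PairwiseDisjoint B := by
      intro x hx y hy hxy
      refine Set.disjoint_iff_inter_eq_empty.2 ?_
      exact tBx_disjoint V (by simp) (by simpa using hxy)
    -- the big ball
    set ξl : tB V := ⟨rayOf V l, rayOf_mem_tB hV hl⟩ with hξl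
    have hξlmem : ξl ∈ tBx V l := rayPrefix_rayOf_self (V := V) l
    have hsub : ∀ x ∈ s, B x ⊆ Metric.ball ξl ((1/2:ℝ) ^ (n - 1)) := by
      intro x hx
      refine (tBx_child_subset V l x).trans ?_
      exact tBx_subset_ball V (by omega) ξl hξlmem
    have hRn : (0:ℝ) < (1/2 : ℝ) ^ (n-1) := by positivity
    have hRle : ((1/2 : ℝ)) ^ (n-1) ≤ Metric.diam (Set.univ : Set (tB V)) := by
      refine le_trans ?_ hdiam
      calc ((1/2:ℝ))^(n-1) ≤ (1/2:ℝ)^1 := by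
            apply pow_le_pow_of_le_one (by norm_num) (by norm_num) (by omega)
        _ = 1/2 := pow_one _
    have hup : μH[Q] (Metric.ball ξl ((1/2:ℝ)^(n-1)))
        ≤ ENNReal.ofReal (C * ((1/2:ℝ)^(n-1)) ^ Q) := by
      have := (hAhl ξl ((1/2:ℝ)^(n-1)) hRn hRle).2
      rwa [hμ] at this
    -- summation
    have hsum : (s.card : ℝ≥0∞) * ENNReal.ofReal (c * ((1/2:ℝ)^n) ^ Q)
        ≤ ENNReal.ofReal (C * ((1/2:ℝ)^(n-1)) ^ Q) := by
      calc (s.card : ℝ≥0∞) * ENNReal.ofReal (c * ((1/2:ℝ)^n) ^ Q)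
          = s.card • ENNReal.ofReal (c * ((1/2:ℝ)^n) ^ Q) := by
            rw [nsmul_eq_mul]
        _ ≤ ∑ x ∈ s, μH[Q] (B x) := Finset.card_nsmul_le_sum s _ _ hlow
        _ = μH[Q] (⋃ x ∈ s, B x) := (measure_biUnion_finset hdisj hmeas).symm
        _ ≤ μH[Q] (Metric.ball ξl ((1/2:ℝ)^(n-1))) := by
            apply measure_mono
            exact Set.iUnion₂_subset hsub
        _ ≤ _ := hup
    -- convert to a real inequality
    have hrQ : (0:ℝ) < ((1/2:ℝ)^n) ^ Q := Real.rpow_pos_of_pos hrn Q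
    have hreal : (s.card : ℝ) * (c * ((1/2:ℝ)^n) ^ Q) ≤ C * ((1/2:ℝ)^(n-1)) ^ Q := by
      have h1 : ((s.card : ℝ≥0∞)) * ENNReal.ofReal (c * ((1/2:ℝ)^n) ^ Q)
          = ENNReal.ofReal ((s.card : ℝ) * (c * ((1/2:ℝ)^n) ^ Q)) := by
        rw [ENNReal.ofReal_mul (Nat.cast_nonneg s.card), ENNReal.ofReal_natCast]
      rw [h1] at hsum
      exact (ENNReal.ofReal_le_ofReal_iff
        (mul_nonneg (hc.trans hcC).le (Real.rpow_nonneg hRn.le Q))).1 hsum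
    have hRQ : ((1/2:ℝ)^(n-1)) ^ Q = (2:ℝ) ^ Q * ((1/2:ℝ)^n) ^ Q := by
      have h12 : ((1/2:ℝ))^(n-1) = 2 * (1/2:ℝ)^n := by
        have h' : ((1/2:ℝ))^n = (1/2:ℝ)^(n-1) * (1/2) := by
          rw [← pow_succ, Nat.sub_add_cancel (by omega : 1 ≤ n)]
        rw [h']
        ring
      rw [h12, Real.mul_rpow (by norm_num) hrn.le]
    have hfinal : (s.card : ℝ) * c ≤ C * (2:ℝ) ^ Q := by
      have h2' : (s.card : ℝ) * c * (((1/2:ℝ)^n) ^ Q) ≤ (C * (2:ℝ)^Q) * (((1/2:ℝ)^n) ^ Q) := by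
        calc (s.card : ℝ) * c * (((1/2:ℝ)^n) ^ Q)
            = (s.card : ℝ) * (c * ((1/2:ℝ)^n) ^ Q) := by ring
          _ ≤ C * ((1/2:ℝ)^(n-1)) ^ Q := hreal
          _ = (C * (2:ℝ)^Q) * (((1/2:ℝ)^n) ^ Q) := by rw [hRQ]; ring
      exact le_of_mul_le_mul_right h2' hrQ
    have : (s.card : ℝ) ≤ (C * (2:ℝ)^Q) / c := (le_div_iff₀ hc).2 hfinal
    have hle : (s.card : ℝ) ≤ (N₀ : ℝ) := this.trans (Nat.le_ceil _)
    exact_mod_cast hle
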